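/- Let K : ℝ × ℝ → [0,∞) be continuous with sup_x ∫_ℝ K(x,y) dy < ∞, and let a : ℝ × ℝ → ℝ be continuous and uniformly bounded. Suppose u : [0,∞) × ℝ → ℝ and u_t are continuous, inf_{t ≥ 0, x ∈ ℝ} u(t,x) > −∞, u(0,·) ≥ 0, and u_t(t,x) ≥ ∫_ℝ K(x,y) u(t,y) dy + a(t,x) u(t,x) for all t > 0, x ∈ ℝ. Then u(t,x) ≥ 0 for all (t,x) ∈ (0,∞) × ℝ. -/

import Mathlib

open MeasureTheory

/-- comparison principle for nonlocal linear evolution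
inequalities (Proposition A.1(iii), nonnegativity). -/
theorem stmt5
    (K : ℝ → ℝ → ℝ) (a u ut : ℝ → ℝ → ℝ)
    (hKcont : Continuous fun p : ℝ × ℝ => K p.1 p.2)
    (hKpos : ∀ x y, 0 ≤ K x y)
    (hKint : ∀ x, Integrable (K x))
    (hKbdd : ∃ B : ℝ, ∀ x, (∫ y, K x y) ≤ B)
    (hacont : Continuous fun p : ℝ × ℝ => a p.1 p.2)
    (habdd : ∃ B : ℝ, ∀ t x, |a t x| ≤ B)
    (hucont : Continuous fun p : ℝ × ℝ => u p.1 p.2)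
    (hutcont : Continuous fun p : ℝ × ℝ => ut p.1 p.2)
    (hbelow : ∃ m : ℝ, ∀ t ≥ (0:ℝ), ∀ x, m ≤ u t x)
    (huint : ∀ t ≥ (0:ℝ), ∀ x, Integrable fun y => K x y * u t y)
    (hderiv : ∀ x : ℝ, ∀ t > (0:ℝ), HasDerivAt (fun s => u s x) (ut t x) t)
    (hineq : ∀ x : ℝ, ∀ t > (0:ℝ), (∫ y, K x y * u t y) + a t x * u t x ≤ ut t x)
    (h0 : ∀ x, 0 ≤ u 0 x) :
    ∀ t > (0:ℝ), ∀ x, 0 ≤ u t x := by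
  obtain ⟨BK, hBK⟩ := hKbdd
  obtain ⟨Ba, hBa⟩ := habdd
  obtain ⟨m, hm⟩ := hbelow
  set C : ℝ := max BK 0 + max Ba 0 + 1 with hCdef
  have hC : 0 < C := by positivity
  set T : ℝ := 1 / (2 * C) with hTdef
  have hT : 0 < T := by positivity
  have hCT : C * T = 1 / 2 := by
    rw [hTdef]; field_simp
  have hcx : ∀ x : ℝ, Continuous fun s => u s x := fun x =>
    hucont.comp (continuous_id.prodMk continuous_const)
  -- Key barrier estimate on a window
  have key : ∀ t₀, 0 ≤ t₀ → ∀ μ, μ ≤ 0 →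
      (∀ s, t₀ ≤ s → s ≤ t₀ + T → ∀ y, μ ≤ u s y) →
      (∀ y, 0 ≤ u t₀ y) →
      ∀ t, t₀ ≤ t → t ≤ t₀ + T → ∀ x, C * μ * (t - t₀) ≤ u t x := by
    intro t₀ ht₀ μ hμ0 hμ hinit t ht1 ht2 x
    rcases eq_or_lt_of_le ht1 with rfl | htlt
    · simpa using hinit x
    · have hCμ : C * μ ≤ 0 := mul_nonpos_of_nonneg_of_nonpos hC.le hμ0
      refine le_of_forall_pos_le_add ?_
      intro ε hε
      -- choose a starting point a0 ∈ (t₀, t] close to t₀ with u a0 x > -ε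
      have hev : ∀ᶠ s in nhds t₀, -ε < u s x := by
        have : Filter.Tendsto (fun s => u s x) (nhds t₀) (nhds (u t₀ x)) :=
          (hcx x).continuousAt
        exact this.eventually_const_lt (by linarith [hinit x])
      obtain ⟨δ, hδ, hδ'⟩ := Metric.eventually_nhds_iff.1 hev
      set a0 : ℝ := min t (t₀ + δ / 2) with ha0def
      have ha0gt : t₀ < a0 := lt_min htlt (by linarith)
      have ha0le : a0 ≤ t := min_le_left _ _
      have ha0near : dist a0 t₀ < δ := by
        rw [Real.dist_eq, abs_of_pos (by linarith)]
        calc a0 - t₀ ≤ (t₀ + δ / 2) - t₀ := by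
              have := min_le_right t (t₀ + δ / 2); linarith
          _ < δ := by linarith
      have ha0u : -ε < u a0 x := hδ' ha0near
      -- apply the fencing theorem on [a0, t]
      have main : ∀ ⦃s⦄, s ∈ Set.Icc a0 t → C * μ * (s - t₀) - ε ≤ u s x := by
        refine image_le_of_deriv_right_lt_deriv_boundary'
          (f := fun s => C * μ * (s - t₀) - ε) (f' := fun _ => C * μ)
          (B := fun s => u s x) (B' := fun s => ut s x) ?_ ?_ ?_ ?_ ?_ ?_
        · exact (((continuous_const.mul (continuous_id.sub continuous_const)).sub
            continuous_const)).continuousOn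
        · intro s _
          have h1 : HasDerivAt (fun y : ℝ => C * μ * (y - t₀) - ε) (C * μ) s := by
            simpa using (((hasDerivAt_id s).sub_const t₀).const_mul (C * μ)).sub_const ε
          exact h1.hasDerivWithinAt
        · -- initial condition at a0
          have h2 : C * μ * (a0 - t₀) ≤ 0 :=
            mul_nonpos_of_nonpos_of_nonneg hCμ (by linarith)
          show C * μ * (a0 - t₀) - ε ≤ u a0 x
          linarith
        · exact (hcx x).continuousOn
        · intro s hs
          exact (hderiv x s (lt_of_le_of_lt ht₀ (lt_of_lt_of_le ha0gt hs.1))).hasDerivWithinAt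
        · -- the strict inequality at contact points
          intro s hs hcontact
          show C * μ < ut s x
          replace hcontact : C * μ * (s - t₀) - ε = u s x := hcontact
          have hst₀ : t₀ ≤ s := le_trans ha0gt.le hs.1
          have hs0 : 0 < s := lt_of_le_of_lt ht₀ (lt_of_lt_of_le ha0gt hs.1)
          have hsT : s ≤ t₀ + T := le_trans hs.2.le ht2
          have hC2 : C * μ * (s - t₀) ≤ 0 :=
            mul_nonpos_of_nonpos_of_nonneg hCμ (by linarith)
          have husx : u s x = C * μ * (s - t₀) - ε := hcontact.symm
          have husneg : u s x < 0 := by rw [husx]; linarith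
          have hμs : μ ≤ u s x := hμ s hst₀ hsT x
          have hμneg : μ < 0 := lt_of_le_of_lt hμs husneg
          -- bound for the integral term
          have hKnn : 0 ≤ ∫ y, K x y := integral_nonneg (hKpos x)
          have hKle : (∫ y, K x y) ≤ max BK 0 := (hBK x).trans (le_max_left _ _)
          have h1 : μ * max BK 0 ≤ ∫ y, K x y * u s y := by
            have e1 : (∫ y, K x y * μ) = (∫ y, K x y) * μ := integral_mul_const μ _
            have e2 : (∫ y, K x y * μ) ≤ ∫ y, K x y * u s y := by
              refine integral_mono ((hKint x).mul_const μ) (huint s hs0.le x) ?_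
              intro y
              exact mul_le_mul_of_nonneg_left (hμ s hst₀ hsT y) (hKpos x y)
            nlinarith
          -- bound for the zero-order term
          have haa : |a s x| ≤ max Ba 0 := (hBa s x).trans (le_max_left _ _)
          have h2 : max Ba 0 * μ ≤ a s x * u s x := by
            have h3 : -|a s x * u s x| ≤ a s x * u s x := neg_abs_le _
            rw [abs_mul, abs_of_neg husneg] at h3
            nlinarith [abs_nonneg (a s x)]
          have h4 := hineq x s hs0
          have hCe : C * μ = μ * max BK 0 + max Ba 0 * μ + μ := by
            rw [hCdef]; ring
          linarith
      have := main (Set.right_mem_Icc.2 ha0le)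
      linarith
  -- iteration within a window: nonnegativity propagates for time T
  have window : ∀ t₀, 0 ≤ t₀ → (∀ y, 0 ≤ u t₀ y) →
      ∀ t, t₀ ≤ t → t ≤ t₀ + T → ∀ x, 0 ≤ u t x := by
    intro t₀ ht₀ hinit
    have hstep : ∀ μ, μ ≤ 0 → (∀ s, t₀ ≤ s → s ≤ t₀ + T → ∀ y, μ ≤ u s y) →
        ∀ s, t₀ ≤ s → s ≤ t₀ + T → ∀ y, μ / 2 ≤ u s y := by
      intro μ hμ0 hμ s hs1 hs2 y
      have hk := key t₀ ht₀ μ hμ0 hμ hinit s hs1 hs2 y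
      have h6 : C * μ * T = μ / 2 := by
        calc C * μ * T = C * T * μ := by ring
          _ = μ / 2 := by rw [hCT]; ring
      have h5 : μ / 2 ≤ C * μ * (s - t₀) := by
        nlinarith [mul_nonneg (mul_nonneg hC.le (neg_nonneg.2 hμ0))
          (sub_nonneg.2 (show s - t₀ ≤ T by linarith)), h6]
      exact le_trans h5 hk
    have hiter : ∀ n : ℕ, ∀ s, t₀ ≤ s → s ≤ t₀ + T → ∀ y, min m 0 / 2 ^ n ≤ u s y := by
      intro n
      induction n with
      | zero =>
        intro s hs1 hs2 y
        simpa using (min_le_left m 0).trans (hm s (ht₀.trans hs1) y)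
      | succ n ih =>
        intro s hs1 hs2 y
        have hneg : min m 0 / 2 ^ n ≤ 0 :=
          div_nonpos_of_nonpos_of_nonneg (min_le_right m 0) (by positivity)
        have := hstep (min m 0 / 2 ^ n) hneg ih s hs1 hs2 y
        rw [pow_succ, ← div_div]
        exact this
    intro t ht1 ht2 x
    have hlim : Filter.Tendsto (fun n : ℕ => min m 0 / 2 ^ n) Filter.atTop (nhds 0) :=
      tendsto_const_nhds.div_atTop (tendsto_pow_atTop_atTop_of_one_lt one_lt_two)
    exact le_of_tendsto' hlim (fun n => hiter n t ht1 ht2 x)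
  -- global induction over windows
  have glob : ∀ n : ℕ, ∀ t, 0 ≤ t → t ≤ n * T → ∀ x, 0 ≤ u t x := by
    intro n
    induction n with
    | zero =>
      intro t h1 h2 x
      have : t = 0 := le_antisymm (by simpa using h2) h1
      rw [this]; exact h0 x
    | succ n ih =>
      intro t h1 h2 x
      by_cases h : t ≤ n * T
      · exact ih t h1 h x
      · push_neg at h
        have hnT : (0:ℝ) ≤ n * T := by positivity
        refine window (n * T) hnT (fun y => ih (n * T) hnT le_rfl y) t h.le ?_ x
        push_cast at h2 ⊢
        linarith
  intro t ht x
  obtain ⟨n, hn⟩ := exists_nat_ge (t / T)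
  have htn : t ≤ n * T := by
    rw [div_le_iff₀ hT] at hn
    exact hn
  exact glob n t ht.le htn x
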